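/- arXiv:1202.5432 — 2 statements merged into one kernel-verified Lean document; each statement's English description precedes it below -/
import Mathlib

section
/- Let Σ be a positive definite p×p real matrix, let p_1, p_2 > 0 with p_1 + p_2 = 1, and let z_1, z_2 ∈ ℝ^p with p_1 z_1 + p_2 z_2 = 0 and z_1 ≠ 0. Set Γ = p_1 z_1 z_1′ + p_2 z_2 z_2′. Then the vector θ̃ = Σ^{−1}(z_1 − z_2) is an eigenvector of Σ^{−1}Γ associated with the eigenvalue (p_1/p_2) z_1′ Σ^{−1} z_1, and this eigenvalue is the unique nonzero (hence maximal) eigenvalue of Σ^{−1}Γ. -/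
open Matrix

lemma vecMulVec_mulVec' {n : ℕ} (w u v : Fin n → ℝ) :
    (vecMulVec w u) *ᵥ v = (u ⬝ᵥ v) • w := by
  funext i
  simp only [mulVec, dotProduct, vecMulVec_apply, Pi.smul_apply, smul_eq_mul,
    Finset.sum_mul, Finset.mul_sum]
  exact Finset.sum_congr rfl fun j _ => by ring

/-- SIR identification with two slices: `θ̃ = Σ⁻¹(z₁ - z₂)` is an eigenvector of `Σ⁻¹Γ`
for the eigenvalue `(p₁/p₂) z₁'Σ⁻¹z₁`, which is the unique nonzero (hence maximal)
eigenvalue of `Σ⁻¹Γ`. -/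
theorem sir_two_slice_eigenvector
    {p : ℕ} (Sig : Matrix (Fin p) (Fin p) ℝ) (hSig : Sig.PosDef)
    (p₁ p₂ : ℝ) (hp₁ : 0 < p₁) (hp₂ : 0 < p₂) (hsum : p₁ + p₂ = 1)
    (z₁ z₂ : Fin p → ℝ) (hbar : p₁ • z₁ + p₂ • z₂ = 0) (hz₁ : z₁ ≠ 0)
    (Γ : Matrix (Fin p) (Fin p) ℝ)
    (hΓ : Γ = p₁ • Matrix.vecMulVec z₁ z₁ + p₂ • Matrix.vecMulVec z₂ z₂)
    (lam : ℝ) (hlam : lam = p₁ / p₂ * dotProduct z₁ (Sig⁻¹.mulVec z₁)) :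
    Sig⁻¹.mulVec (z₁ - z₂) ≠ 0 ∧
    (Sig⁻¹ * Γ).mulVec (Sig⁻¹.mulVec (z₁ - z₂)) = lam • Sig⁻¹.mulVec (z₁ - z₂) ∧
    lam ≠ 0 ∧
    (∀ c : ℝ, c ≠ 0 → (∃ v : Fin p → ℝ, v ≠ 0 ∧ (Sig⁻¹ * Γ).mulVec v = c • v) → c = lam) := by
  have hp₂' : p₂ ≠ 0 := ne_of_gt hp₂
  -- z₂ in terms of z₁
  have hz₂ : z₂ = (-(p₁ / p₂)) • z₁ := by
    funext i
    have := congrFun hbar i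
    simp only [Pi.add_apply, Pi.smul_apply, smul_eq_mul, Pi.zero_apply] at this
    simp only [Pi.smul_apply, smul_eq_mul]
    field_simp
    linarith
  -- Γ is rank one
  have hcoef : p₁ + p₂ * (p₁ / p₂) * (p₁ / p₂) = p₁ / p₂ := by
    field_simp
    linear_combination hsum
  have hΓ' : Γ = (p₁ / p₂) • vecMulVec z₁ z₁ := by
    rw [hΓ, hz₂]
    ext i j
    simp only [Matrix.add_apply, Matrix.smul_apply, vecMulVec_apply, Pi.smul_apply, smul_eq_mul]
    linear_combination (z₁ i * z₁ j) * hcoef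
  -- key: action of Σ⁻¹Γ
  have key : ∀ v : Fin p → ℝ,
      (Sig⁻¹ * Γ) *ᵥ v = (p₁ / p₂ * (z₁ ⬝ᵥ v)) • (Sig⁻¹ *ᵥ z₁) := by
    intro v
    rw [← mulVec_mulVec, hΓ', smul_mulVec, vecMulVec_mulVec', mulVec_smul,
      mulVec_smul, smul_smul, mul_comm]
  -- Σ⁻¹ posdef, hence injective mulVec and positive quadratic form
  have hinv : (Sig⁻¹).PosDef := hSig.inv
  have hq : 0 < z₁ ⬝ᵥ (Sig⁻¹ *ᵥ z₁) := by
    have := hinv.dotProduct_mulVec_pos hz₁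
    simpa using this
  have hlam0 : lam ≠ 0 := by
    rw [hlam]
    positivity
  have hdet : Sig.det ≠ 0 := ne_of_gt hSig.det_pos
  have hinj : ∀ x : Fin p → ℝ, Sig⁻¹ *ᵥ x = 0 → x = 0 := by
    intro x hx
    have : Sig *ᵥ (Sig⁻¹ *ᵥ x) = Sig *ᵥ 0 := by rw [hx]
    rwa [mulVec_mulVec, mul_nonsing_inv _ (isUnit_iff_ne_zero.mpr hdet), one_mulVec, mulVec_zero] at this
  have hiz₁ : Sig⁻¹ *ᵥ z₁ ≠ 0 := fun h => hz₁ (hinj _ h)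
  -- z₁ - z₂ = (1/p₂) • z₁
  have hdiff : z₁ - z₂ = p₂⁻¹ • z₁ := by
    rw [hz₂]
    funext i
    simp only [Pi.sub_apply, Pi.smul_apply, smul_eq_mul]
    field_simp
    linear_combination z₁ i * hsum
  have hθ : Sig⁻¹ *ᵥ (z₁ - z₂) = p₂⁻¹ • (Sig⁻¹ *ᵥ z₁) := by
    rw [hdiff, mulVec_smul]
  refine ⟨?_, ?_, hlam0, ?_⟩
  · rw [hθ]
    intro h
    apply hiz₁
    have := congrArg (fun w => p₂ • w) h
    simpa [smul_smul, hp₂'] using this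
  · rw [hθ, key, dotProduct_smul]
    simp only [smul_smul, smul_eq_mul]
    congr 1
    rw [hlam]
    ring
  · rintro c hc ⟨v, hv, hev⟩
    rw [key] at hev
    have hdv : z₁ ⬝ᵥ v ≠ 0 := by
      intro h0
      apply hv
      have : c • v = 0 := by rw [← hev, h0]; simp
      simpa [hc] using smul_eq_zero.mp this
    have := congrArg (fun w => z₁ ⬝ᵥ w) hev
    simp only [dotProduct_smul, smul_eq_mul] at this
    have h2 : c * (z₁ ⬝ᵥ v) = (p₁ / p₂ * (z₁ ⬝ᵥ (Sig⁻¹ *ᵥ z₁))) * (z₁ ⬝ᵥ v) := by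
      linear_combination -this
    rw [hlam]
    exact mul_right_cancel₀ hdv h2
end

section
/- Let x_1, …, x_n ∈ ℝ^p with n ≥ 2. Define X̄_m = m^{−1} Σ_{k=1}^m x_k, Σ_m = m^{−1} Σ_{k=1}^m (x_k − X̄_m)(x_k − X̄_m)′, Φ_n = x_n − X̄_{n−1}, and ρ_n = Φ_n′ Σ_{n−1}^{−1} Φ_n. If Σ_{n−1} is invertible and n + ρ_n ≠ 0, then Σ_n is invertible and its inverse satisfies the Riccati equation Σ_n^{−1} = (n/(n−1)) Σ_{n−1}^{−1} − (n/((n−1)(n+ρ_n))) Σ_{n−1}^{−1} Φ_n Φ_n′ Σ_{n−1}^{−1}. -/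
open Matrix Finset

lemma vvMvv {p : ℕ} (M : Matrix (Fin p) (Fin p) ℝ) (v : Fin p → ℝ) :
    vecMulVec v v * M * vecMulVec v v = (dotProduct v (M.mulVec v)) • vecMulVec v v := by
  ext i j
  simp only [Matrix.mul_apply, vecMulVec_apply, Matrix.smul_apply, dotProduct,
    Matrix.mulVec, smul_eq_mul, Finset.sum_mul, Finset.mul_sum]
  rw [Finset.sum_comm]
  apply Finset.sum_congr rfl; intro a _
  apply Finset.sum_congr rfl; intro b _
  ring

lemma sherman {p : ℕ} (A : Matrix (Fin p) (Fin p) ℝ) (hA : IsUnit A.det)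
    (v : Fin p → ℝ) (c d ρ : ℝ) (hρ : ρ = dotProduct v (A⁻¹.mulVec v))
    (hc : c ≠ 0) (h : c + d * ρ ≠ 0) :
    IsUnit (c • A + d • vecMulVec v v).det ∧
    (c • A + d • vecMulVec v v)⁻¹ =
      c⁻¹ • A⁻¹ - (d / (c * (c + d * ρ))) • (A⁻¹ * vecMulVec v v * A⁻¹) := by
  have hAA : A * A⁻¹ = 1 := Matrix.mul_nonsing_inv A hA
  set k : ℝ := d / (c * (c + d * ρ)) with hk
  have key : (c • A + d • vecMulVec v v) * (c⁻¹ • A⁻¹ - k • (A⁻¹ * vecMulVec v v * A⁻¹)) = 1 := by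
    have h1 : vecMulVec v v * (A⁻¹ * vecMulVec v v * A⁻¹)
        = ρ • (vecMulVec v v * A⁻¹) := by
      calc vecMulVec v v * (A⁻¹ * vecMulVec v v * A⁻¹)
          = (vecMulVec v v * A⁻¹ * vecMulVec v v) * A⁻¹ := by noncomm_ring
        _ = ρ • (vecMulVec v v * A⁻¹) := by
            rw [show vecMulVec v v * A⁻¹ * vecMulVec v v = ρ • vecMulVec v v from
              by rw [hρ]; exact vvMvv A⁻¹ v, Matrix.smul_mul]
    have h2 : A * (A⁻¹ * vecMulVec v v * A⁻¹) = vecMulVec v v * A⁻¹ := by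
      rw [← Matrix.mul_assoc, ← Matrix.mul_assoc, hAA, Matrix.one_mul]
    rw [Matrix.add_mul, Matrix.mul_sub, Matrix.mul_sub]
    simp only [Matrix.smul_mul, Matrix.mul_smul]
    rw [hAA, h2, h1]
    rw [hk]
    match_scalars <;> field_simp <;> ring
  exact ⟨Matrix.isUnit_det_of_right_inverse key, Matrix.inv_eq_right_inv key⟩

/-- Riccati (Sherman–Morrison) update for the inverse empirical covariance matrix. -/
theorem riccati_update_inverse_sample_covariance
    {p : ℕ} (x : ℕ → (Fin p → ℝ)) (n : ℕ) (hn : 2 ≤ n)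
    (Xbar : ℕ → (Fin p → ℝ))
    (hXbar : ∀ m, Xbar m = (m : ℝ)⁻¹ • ∑ k ∈ Finset.Icc 1 m, x k)
    (S : ℕ → Matrix (Fin p) (Fin p) ℝ)
    (hS : ∀ m, S m = (m : ℝ)⁻¹ •
      ∑ k ∈ Finset.Icc 1 m, Matrix.vecMulVec (x k - Xbar m) (x k - Xbar m))
    (Φ : Fin p → ℝ) (hΦ : Φ = x n - Xbar (n - 1))
    (ρ : ℝ) (hρ : ρ = dotProduct Φ ((S (n - 1))⁻¹.mulVec Φ))
    (hinv : IsUnit (S (n - 1)).det) (hne : (n : ℝ) + ρ ≠ 0) :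
    IsUnit (S n).det ∧
    (S n)⁻¹ = ((n : ℝ) / ((n : ℝ) - 1)) • (S (n - 1))⁻¹ -
      ((n : ℝ) / (((n : ℝ) - 1) * ((n : ℝ) + ρ))) •
        ((S (n - 1))⁻¹ * Matrix.vecMulVec Φ Φ * (S (n - 1))⁻¹) := by
  have hm1 : (n - 1) + 1 = n := by omega
  have hmcast : ((n - 1 : ℕ) : ℝ) = (n : ℝ) - 1 := by
    push_cast [Nat.cast_sub (by omega : 1 ≤ n)]; ring
  have hN : (n : ℝ) ≠ 0 := by
    have : (2 : ℝ) ≤ (n : ℝ) := by exact_mod_cast hn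
    linarith
  have hM : (n : ℝ) - 1 ≠ 0 := by
    have : (2 : ℝ) ≤ (n : ℝ) := by exact_mod_cast hn
    linarith
  -- sum of coordinates equals m times the mean
  have hsum : ∀ m : ℕ, m ≠ 0 → ∀ i, (∑ k ∈ Finset.Icc 1 m, x k i) = (m : ℝ) * Xbar m i := by
    intro m hm i
    have hm' : (m : ℝ) ≠ 0 := Nat.cast_ne_zero.mpr hm
    rw [hXbar]
    simp only [Pi.smul_apply, Finset.sum_apply, smul_eq_mul]
    field_simp
  -- expansion of S m entrywise
  have expand : ∀ m : ℕ, m ≠ 0 → ∀ i j, S m i j =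
      (m : ℝ)⁻¹ * ((∑ k ∈ Finset.Icc 1 m, x k i * x k j) - (m : ℝ) * (Xbar m i * Xbar m j)) := by
    intro m hm i j
    rw [hS]
    simp only [Matrix.smul_apply, Matrix.sum_apply, vecMulVec_apply, Pi.sub_apply, smul_eq_mul]
    rw [Finset.sum_congr rfl (fun k _ => by ring :
      ∀ k ∈ Finset.Icc 1 m, (x k i - Xbar m i) * (x k j - Xbar m j) =
        x k i * x k j - Xbar m j * x k i - Xbar m i * x k j + Xbar m i * Xbar m j)]
    rw [Finset.sum_add_distrib, Finset.sum_sub_distrib, Finset.sum_sub_distrib,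
      ← Finset.mul_sum, ← Finset.mul_sum, Finset.sum_const, Nat.card_Icc,
      hsum m hm i, hsum m hm j]
    have : m + 1 - 1 = m := by omega
    rw [this, nsmul_eq_mul]
    ring
  have hmne : n - 1 ≠ 0 := by omega
  -- splitting the top term
  have hsplit : ∀ f : ℕ → ℝ, (∑ k ∈ Finset.Icc 1 n, f k) =
      (∑ k ∈ Finset.Icc 1 (n - 1), f k) + f n := by
    intro f
    rw [← hm1, Finset.sum_Icc_succ_top (by omega), Nat.add_sub_cancel]
  -- relation between consecutive means
  have hb : ∀ i, Xbar n i = (((n : ℝ) - 1) * Xbar (n - 1) i + x n i) / (n : ℝ) := by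
    intro i
    have h1 := hsum n (by omega) i
    rw [hsplit (fun k => x k i), hsum (n - 1) hmne i, hmcast] at h1
    field_simp at h1 ⊢
    linarith [h1]
  -- the rank-one update identity
  have key : S n = (((n : ℝ) - 1) / (n : ℝ)) • S (n - 1) +
      (((n : ℝ) - 1) / (n : ℝ) ^ 2) • vecMulVec Φ Φ := by
    ext i j
    simp only [Matrix.add_apply, Matrix.smul_apply, vecMulVec_apply, smul_eq_mul]
    rw [expand n (by omega) i j, expand (n - 1) hmne i j, hmcast,
      hsplit (fun k => x k i * x k j), hb i, hb j, hΦ]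
    simp only [Pi.sub_apply]
    field_simp
    ring
  -- apply Sherman–Morrison
  have hc : ((n : ℝ) - 1) / (n : ℝ) ≠ 0 := div_ne_zero hM hN
  have hrepr : ((n : ℝ) - 1) / (n : ℝ) + (((n : ℝ) - 1) / (n : ℝ) ^ 2) * ρ =
      (((n : ℝ) - 1) * ((n : ℝ) + ρ)) / (n : ℝ) ^ 2 := by field_simp
  have hcd : ((n : ℝ) - 1) / (n : ℝ) + (((n : ℝ) - 1) / (n : ℝ) ^ 2) * ρ ≠ 0 := by
    rw [hrepr]
    exact div_ne_zero (mul_ne_zero hM hne) (pow_ne_zero 2 hN)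
  obtain ⟨h1, h2⟩ := sherman (S (n - 1)) hinv Φ (((n : ℝ) - 1) / (n : ℝ))
    (((n : ℝ) - 1) / (n : ℝ) ^ 2) ρ hρ hc hcd
  rw [key]
  refine ⟨h1, ?_⟩
  have hscal : ((n : ℝ) - 1) / (n : ℝ) ^ 2 /
      (((n : ℝ) - 1) / (n : ℝ) * ((((n : ℝ) - 1) * ((n : ℝ) + ρ)) / (n : ℝ) ^ 2)) =
      (n : ℝ) / (((n : ℝ) - 1) * ((n : ℝ) + ρ)) := by
    rw [div_eq_div_iff (by positivity) (mul_ne_zero hM hne)]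
    field_simp
  rw [h2, hrepr, hscal, inv_div]
end
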